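/- Let f(t) be a primitive monic irreducible polynomial of degree d over the finite field F_q (i.e. its companion matrix [f] has multiplicative order q^d - 1). Let d' divide d, write d = d'·s, and let m' be a divisor of q^{d'} - 1 such that the multiplicative order of q modulo m' equals d'. Then for every positive integer l ≤ m' with gcd(l, m') = 1 there is a monic irreducible polynomial g(t) over F_q of degree d' and order m' such that g(t)^s = det(tE - [f]^{((q^d - 1)/m')·l}), i.e. g(t)^s is the characteristic polynomial of [f]^{((q^d-1)/m')·l}. -/

import Mathlib

/-- Entry (i,j) of the companion matrix of a monic polynomial
`f = a_0 + a_1 t + ... + a_{d-1} t^{d-1} + t^d`. -/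
def companionEntry {F : Type} [Field F] (d : ℕ) (f : Polynomial F) (i j : ℕ) : F :=
  if i = d - 1 then -f.coeff j else if j = i + 1 then 1 else 0

/-- The companion matrix of a monic polynomial of degree d: 1's on the
superdiagonal, last row `(-a_0, ..., -a_{d-1})`, 0's elsewhere. -/
def companionMatrix {F : Type} [Field F] (d : ℕ) (f : Polynomial F) :
    Matrix (Fin d) (Fin d) F :=
  Matrix.of fun i j => companionEntry d f (i : ℕ) (j : ℕ)

open Polynomial AdjoinRoot Matrix in
lemma companion_eq_transpose {F : Type} [Field F] {h : Polynomial F} (hm : h.Monic)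
    (hpos : 0 < h.natDegree) :
    companionMatrix h.natDegree h =
      (Algebra.leftMulMatrix (AdjoinRoot.powerBasis' hm).basis (AdjoinRoot.root h))ᵀ := by
  have hdeg : degree h = (h.natDegree : WithBot ℕ) := degree_eq_natDegree hm.ne_zero
  have hxe : (X : Polynomial F) ^ h.natDegree %ₘ h = X ^ h.natDegree - h := by
    have hlt : degree ((X : Polynomial F) ^ h.natDegree - h) < degree h := by
      have := degree_sub_lt (p := (X : Polynomial F) ^ h.natDegree) (q := h)
        (by rw [degree_X_pow, hdeg]) (pow_ne_zero _ X_ne_zero)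
        (by rw [hm.leadingCoeff, leadingCoeff_X_pow])
      rwa [degree_X_pow, ← hdeg] at this
    exact (div_modByMonic_unique (f := (X : Polynomial F) ^ h.natDegree) (g := h)
      1 (X ^ h.natDegree - h) hm ⟨by ring, hlt⟩).2
  ext i j
  show companionEntry h.natDegree h i j = _
  erw [Matrix.transpose_apply, Algebra.leftMulMatrix_eq_repr_mul]
  have hbi : (AdjoinRoot.powerBasis' hm).basis i = AdjoinRoot.root h ^ (i : ℕ) :=
    (AdjoinRoot.powerBasis' hm).basis_eq_pow i
  rw [hbi, ← pow_succ']
  have : (AdjoinRoot.root h) ^ ((i : ℕ) + 1) = AdjoinRoot.mk h (X ^ ((i : ℕ) + 1)) := by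
    rw [map_pow, AdjoinRoot.mk_X]
  rw [this]
  rw [show ((AdjoinRoot.powerBasis' hm).basis.repr (AdjoinRoot.mk h (X ^ ((i:ℕ)+1)))) j
      = ((modByMonicHom hm) (AdjoinRoot.mk h (X ^ ((i:ℕ)+1)))).coeff j from rfl]
  rw [AdjoinRoot.modByMonicHom_mk]
  unfold companionEntry
  by_cases hi : (i : ℕ) = h.natDegree - 1
  · have : (i : ℕ) + 1 = h.natDegree := by omega
    rw [if_pos hi, this, hxe, coeff_sub, coeff_X_pow, if_neg (by omega : (j:ℕ) ≠ h.natDegree)]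
    ring
  · have hlt : (i : ℕ) + 1 < h.natDegree := by have := i.isLt; omega
    rw [if_neg hi]
    rw [(modByMonic_eq_self_iff hm).2 (by rw [degree_X_pow, hdeg]; exact_mod_cast hlt),
      coeff_X_pow]

open Matrix in
lemma orderOf_transpose {F : Type} [Field F] {m : ℕ} (A : Matrix (Fin m) (Fin m) F) :
    orderOf Aᵀ = orderOf A := by
  exact orderOf_eq_orderOf_iff.2 fun k => by rw [← transpose_pow, transpose_eq_one]

open Polynomial Matrix in
lemma charpoly_transpose {F : Type} [Field F] {m : ℕ} (A : Matrix (Fin m) (Fin m) F) :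
    Aᵀ.charpoly = A.charpoly := by
  rw [Matrix.charpoly, Matrix.charpoly]
  have : charmatrix Aᵀ = (charmatrix A)ᵀ := by
    ext i j
    by_cases hij : i = j
    · subst hij; simp [charmatrix_apply_eq]
    · rw [transpose_apply, charmatrix_apply_ne _ _ _ hij,
        charmatrix_apply_ne _ _ _ (Ne.symm hij), transpose_apply]
  rw [this, det_transpose]

open Polynomial Matrix in
lemma charpoly_blockDiagonal {F : Type} [Field F] {m o : Type} [Fintype m] [DecidableEq m]
    [Fintype o] [DecidableEq o] (M : o → Matrix m m F) :
    (blockDiagonal M).charpoly = ∏ k : o, (M k).charpoly := by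
  have : charmatrix (blockDiagonal M) = blockDiagonal (fun k => charmatrix (M k)) := by
    ext ⟨i, k⟩ ⟨j, k'⟩
    by_cases hk : k = k'
    · subst hk
      by_cases hij : i = j
      · subst hij; simp [charmatrix_apply_eq, blockDiagonal_apply_eq]
      · rw [blockDiagonal_apply_eq, charmatrix_apply_ne _ _ _ hij,
          charmatrix_apply_ne _ _ _ (by simp [hij] : ((i,k) : m × o) ≠ (j,k)),
          blockDiagonal_apply_eq]
    · rw [blockDiagonal_apply_ne _ _ _ hk,
        charmatrix_apply_ne _ _ _ (by simp [hk] : ((i,k) : m × o) ≠ (j,k')),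
        blockDiagonal_apply_ne _ _ _ hk, map_zero, neg_zero]
  rw [Matrix.charpoly, this, det_blockDiagonal]
  rfl

open Polynomial Matrix IntermediateField

/-- Let f be a primitive monic irreducible polynomial of degree d
over F_q (its companion matrix [f] has multiplicative order q^d - 1).  Let d' ∣ d
with d = d'·s, and let m' be a divisor of q^{d'} - 1 such that the multiplicative
order of q modulo m' equals d'.  Then for every positive l ≤ m' with gcd(l,m') = 1
there is a monic irreducible polynomial g over F_q of degree d' and order m' with
g^s = det(tE - [f]^{((q^d-1)/m')·l}), the characteristic polynomial of that power. -/
theorem irreducible_factors_from_primitive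
    (p n d d' s : ℕ) (hp : p.Prime) (hn : 0 < n)
    (F : Type) [Field F] [Fintype F] (hF : Fintype.card F = p ^ n)
    (f : Polynomial F) (hmonic : f.Monic) (hdeg : f.natDegree = d)
    (hirr : Irreducible f)
    (hprim : orderOf (companionMatrix d f) = (p ^ n) ^ d - 1)
    (hd's : d = d' * s) (hd' : 0 < d')
    (m' : ℕ) (hm'dvd : m' ∣ (p ^ n) ^ d' - 1)
    (hm'ord : IsLeast {e : ℕ | 0 < e ∧ m' ∣ (p ^ n) ^ e - 1} d')
    (l : ℕ) (hl : 0 < l) (hlm : l ≤ m') (hcop : Nat.Coprime l m') :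
    ∃ g : Polynomial F, g.Monic ∧ Irreducible g ∧ g.natDegree = d' ∧
      orderOf (companionMatrix d' g) = m' ∧
      g ^ s = Matrix.charpoly (companionMatrix d f ^ (((p ^ n) ^ d - 1) / m' * l)) := by
  subst hdeg
  have hq1 : 1 < p ^ n := Nat.one_lt_pow hn.ne' hp.one_lt
  haveI : Fact (Irreducible f) := ⟨hirr⟩
  haveI : Fact p.Prime := ⟨hp⟩
  set K := AdjoinRoot f with hK
  set x : K := AdjoinRoot.root f with hx
  have hfpos : 0 < f.natDegree := hirr.natDegree_pos
  have hcompf := companion_eq_transpose hmonic hfpos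
  set pb := AdjoinRoot.powerBasis' hmonic with hpb
  haveI : Module.Finite F K := Module.Finite.of_basis pb.basis
  haveI : Module.Free F K := Module.Free.of_basis pb.basis
  -- the order of x
  have hordx : orderOf x = (p ^ n) ^ f.natDegree - 1 := by
    have h2 : orderOf (Algebra.leftMulMatrix pb.basis x) = orderOf x :=
      orderOf_injective (MonoidHomClass.toMonoidHom (Algebra.leftMulMatrix pb.basis))
        (Algebra.leftMulMatrix_injective pb.basis) x
    erw [hcompf, orderOf_transpose, h2] at hprim
    exact hprim
  set N := (p ^ n) ^ f.natDegree - 1 with hN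
  have hNpos : 0 < N := Nat.sub_pos_of_lt (Nat.one_lt_pow hfpos.ne' hq1)
  have hm'pos : 0 < m' := by
    rcases Nat.eq_zero_or_pos m' with h0 | h
    · rw [h0] at hm'dvd
      have h1 := Nat.eq_zero_of_zero_dvd hm'dvd
      have h2 : 1 < (p ^ n) ^ d' := Nat.one_lt_pow hd'.ne' hq1
      omega
    · exact h
  have hm'N : m' ∣ N := by
    refine hm'dvd.trans ?_
    rw [hN, hd's, pow_mul]
    simpa using Nat.sub_dvd_pow_sub_pow ((p ^ n) ^ d') 1 s
  set t := N / m' with ht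
  have htm : m' * t = N := Nat.mul_div_cancel' hm'N
  have htpos : 0 < t := Nat.div_pos (Nat.le_of_dvd hNpos hm'N) hm'pos
  set k := t * l with hk
  set β : K := x ^ k with hβ
  have hordβ : orderOf β = m' := by
    have hgcd : Nat.gcd N k = t := by
      rw [← htm, hk, mul_comm m' t, Nat.gcd_mul_left, hcop.symm.gcd_eq_one, mul_one]
    rw [hβ, orderOf_pow' x (Nat.mul_ne_zero htpos.ne' hl.ne'), hordx, hgcd, ← htm,
      Nat.mul_div_cancel _ htpos]
  have hβm' : β ^ m' = 1 := by rw [← hordβ]; exact pow_orderOf_eq_one β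
  have hβ0 : β ≠ 0 := by
    intro h0
    rw [h0, zero_pow hm'pos.ne'] at hβm'
    exact one_ne_zero hβm'.symm
  have hint : IsIntegral F β := IsIntegral.of_finite F β
  set g := minpoly F β with hg
  have hgmonic : g.Monic := minpoly.monic hint
  have hgirr : Irreducible g := minpoly.irreducible hint
  -- characteristic p
  haveI hcharF : CharP F p := by
    haveI h1 := ringChar.charP F
    obtain ⟨n0, hp0, hcard⟩ := FiniteField.card F (ringChar F)
    have hdvd : p ∣ ringChar F ^ (n0 : ℕ) := by
      rw [← hcard, hF]; exact dvd_pow_self p hn.ne'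
    have : p = ringChar F := (Nat.prime_dvd_prime_iff_eq hp hp0).1 (hp.dvd_of_dvd_pow hdvd)
    rwa [this]
  haveI hcharK : CharP K p := charP_of_injective_algebraMap (algebraMap F K).injective p
  haveI : ExpChar K p := ExpChar.prime hp
  -- the intermediate field F⟮β⟯
  haveI : FiniteDimensional F F⟮β⟯ := IntermediateField.adjoin.finiteDimensional hint
  haveI : Finite F⟮β⟯ := Module.finite_of_finite F
  letI : Fintype F⟮β⟯ := Fintype.ofFinite _
  have hfr : Module.finrank F F⟮β⟯ = g.natDegree := IntermediateField.adjoin.finrank hint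
  have hcardL : Fintype.card F⟮β⟯ = (p ^ n) ^ g.natDegree := by
    rw [Module.card_eq_pow_finrank (K := F) (V := F⟮β⟯), hF, hfr]
  set gen : F⟮β⟯ := IntermediateField.AdjoinSimple.gen F β with hgen
  have hgenmap : algebraMap F⟮β⟯ K gen = β := IntermediateField.AdjoinSimple.algebraMap_gen F β
  have hordgen : orderOf gen = m' := by
    have h : orderOf (algebraMap F⟮β⟯ K gen) = orderOf gen :=
      orderOf_injective (MonoidHomClass.toMonoidHom (algebraMap F⟮β⟯ K))
        (algebraMap F⟮β⟯ K).injective gen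
    rw [hgenmap] at h
    rw [← h, hordβ]
  have hgen0 : gen ≠ 0 := by
    intro h0
    rw [h0, map_zero] at hgenmap
    exact hβ0 hgenmap.symm
  have hd'le : d' ≤ g.natDegree := by
    refine hm'ord.2 ⟨minpoly.natDegree_pos hint, ?_⟩
    rw [← hordgen]
    apply orderOf_dvd_of_pow_eq_one
    have h1 := FiniteField.pow_card_sub_one_eq_one gen hgen0
    rwa [hcardL] at h1
  -- every element of F⟮β⟯ is fixed by the d'-th power of the q-Frobenius
  have hQfix : ∀ z : K, z ∈ F⟮β⟯ → z ^ (p ^ n) ^ d' = z := by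
    intro z hz
    have hz' : z ∈ Algebra.adjoin F {β} := by
      rw [← IntermediateField.adjoin_simple_toSubalgebra_of_isAlgebraic hint.isAlgebraic]
      exact hz
    refine Algebra.adjoin_induction (p := fun w _ => w ^ (p ^ n) ^ d' = w) ?_ ?_ ?_ ?_ hz'
    · intro w hw
      rw [Set.mem_singleton_iff] at hw
      subst hw
      have h1 : β ^ ((p ^ n) ^ d' - 1) = 1 := by
        apply orderOf_dvd_iff_pow_eq_one.1
        rw [hordβ]
        exact hm'dvd
      have h2 : 1 ≤ (p ^ n) ^ d' := Nat.one_le_pow _ _ (by positivity)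
      calc β ^ (p ^ n) ^ d' = β ^ ((p ^ n) ^ d' - 1 + 1) := by congr 1; omega
        _ = β := by rw [pow_succ, h1, one_mul]
    · intro r
      rw [← map_pow]
      congr 1
      have h1 := FiniteField.pow_card_pow (K := F) d' r
      rwa [hF] at h1
    · intro a b _ _ ha hb
      have hQp : (p ^ n) ^ d' = p ^ (n * d') := by rw [← pow_mul]
      rw [hQp] at ha hb ⊢
      rw [add_pow_char_pow, ha, hb]
    · intro a b _ _ ha hb
      rw [mul_pow, ha, hb]
  -- cardinality bound forces the degree
  have hcardle : Fintype.card F⟮β⟯ ≤ (p ^ n) ^ d' := by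
    classical
    set P : Polynomial K := X ^ (p ^ n) ^ d' - X with hP
    have hP0 : P ≠ 0 := FiniteField.X_pow_card_pow_sub_X_ne_zero _ hd'.ne' hq1
    have hPdeg : P.natDegree = (p ^ n) ^ d' :=
      FiniteField.X_pow_card_pow_sub_X_natDegree_eq _ hd'.ne' hq1
    have hmem : ∀ z : F⟮β⟯, (z : K) ∈ P.roots.toFinset := by
      intro z
      rw [Multiset.mem_toFinset, Polynomial.mem_roots hP0]
      show P.eval (z : K) = 0
      rw [hP, Polynomial.eval_sub, Polynomial.eval_pow, Polynomial.eval_X]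
      exact sub_eq_zero.2 (hQfix z z.2)
    have h1 : (Finset.univ.image (fun z : F⟮β⟯ => (z : K))).card = Fintype.card F⟮β⟯ := by
      rw [Finset.card_image_of_injective _ Subtype.coe_injective, Finset.card_univ]
    have h2 : (Finset.univ.image (fun z : F⟮β⟯ => (z : K))) ⊆ P.roots.toFinset := by
      intro w hw
      rw [Finset.mem_image] at hw
      obtain ⟨z, _, rfl⟩ := hw
      exact hmem z
    have h3 := Finset.card_le_card h2
    have h4 : P.roots.toFinset.card ≤ Multiset.card P.roots := P.roots.toFinset_card_le
    have h5 : Multiset.card P.roots ≤ P.natDegree := P.card_roots'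
    omega
  have hele : g.natDegree ≤ d' := by
    have h1 : (p ^ n) ^ g.natDegree ≤ (p ^ n) ^ d' := hcardL ▸ hcardle
    exact (Nat.pow_le_pow_iff_right hq1).1 h1
  have hgd : g.natDegree = d' := le_antisymm hele hd'le
  -- order of the companion matrix of g
  haveI : Fact (Irreducible g) := ⟨hgirr⟩
  have hgpos : 0 < g.natDegree := minpoly.natDegree_pos hint
  have hcompg := companion_eq_transpose hgmonic hgpos
  have hordg : orderOf (companionMatrix g.natDegree g) = m' := by
    have h2 : orderOf (Algebra.leftMulMatrix (AdjoinRoot.powerBasis' hgmonic).basis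
        (AdjoinRoot.root g)) = orderOf (AdjoinRoot.root g) :=
      orderOf_injective (MonoidHomClass.toMonoidHom
        (Algebra.leftMulMatrix (AdjoinRoot.powerBasis' hgmonic).basis))
        (Algebra.leftMulMatrix_injective _) (AdjoinRoot.root g)
    erw [hcompg, orderOf_transpose, h2]
    have e1 : orderOf (AdjoinRoot.root g) = orderOf gen := by
      have h3 : orderOf (IntermediateField.adjoinRootEquivAdjoin F hint
            (AdjoinRoot.root (minpoly F β)))
          = orderOf (AdjoinRoot.root (minpoly F β)) :=
        orderOf_injective
          (MonoidHomClass.toMonoidHom (IntermediateField.adjoinRootEquivAdjoin F hint))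
          (IntermediateField.adjoinRootEquivAdjoin F hint).injective _
      rw [IntermediateField.adjoinRootEquivAdjoin_apply_root F hint] at h3
      exact h3.symm
    rw [e1, hordgen]
  -- the characteristic polynomial computation
  haveI : FiniteDimensional F⟮β⟯ K := Module.Finite.right F F⟮β⟯ K
  set pbβ := IntermediateField.adjoin.powerBasis hint with hpbβ
  set c := Module.finBasis F⟮β⟯ K with hc
  have hrs : Module.finrank F⟮β⟯ K = s := by
    have h1 : Module.finrank F F⟮β⟯ * Module.finrank F⟮β⟯ K = Module.finrank F K :=
      Module.finrank_mul_finrank F F⟮β⟯ K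
    have h2 : Module.finrank F K = f.natDegree := pb.finrank
    rw [hfr, hgd, h2, hd's] at h1
    exact Nat.eq_of_mul_eq_mul_left hd' h1
  have hchar2 : Matrix.charpoly (Algebra.leftMulMatrix pb.basis β) = g ^ s := by
    have e1 : Matrix.charpoly (Algebra.leftMulMatrix pb.basis β)
        = LinearMap.charpoly (Algebra.lmul F K β) := by
      rw [Algebra.leftMulMatrix_apply]
      exact LinearMap.charpoly_toMatrix _ _
    have e2 : Matrix.charpoly (Algebra.leftMulMatrix (pbβ.basis.smulTower c)
          (algebraMap F⟮β⟯ K gen))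
        = LinearMap.charpoly (Algebra.lmul F K β) := by
      rw [hgenmap, Algebra.leftMulMatrix_apply]
      exact LinearMap.charpoly_toMatrix _ _
    rw [e1, ← e2, Algebra.smulTower_leftMulMatrix_algebraMap,
      charpoly_blockDiagonal, Finset.prod_const, Finset.card_univ, Fintype.card_fin]
    have e3 : Matrix.charpoly (Algebra.leftMulMatrix pbβ.basis gen) = g := by
      have := charpoly_leftMulMatrix pbβ
      rw [hpbβ, IntermediateField.adjoin.powerBasis_gen] at this
      rw [this]
      exact IntermediateField.minpoly_gen F β
    rw [e3, hrs]
  refine ⟨g, hgmonic, hgirr, hgd, ?_, ?_⟩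
  · rw [← hgd]
    exact hordg
  · erw [hcompf, ← transpose_pow, _root_.charpoly_transpose, ← map_pow, ← hβ]
    exact hchar2.symm
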